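/- Let A, A′, B be mutually independent random elements on a probability space with A′ identically distributed as A (values in ℝ^p and ℝ^q respectively), and let g : ℝ^p × ℝ^q → ℝ^n be measurable with E[‖g(A,B)‖²] < ∞. Then Cov(g(A,B) − E[g(A,B) | σ(B)]) = E[g(A,B) g(A,B)ᵀ] − E[g(A,B) g(A′,B)ᵀ], i.e. the total-effect covariance matrix of the block A equals the second-moment matrix of the outputs minus the pick-freeze cross-moment matrix in which the A-block is replaced by an independent copy. -/

import Mathlib

open MeasureTheory ProbabilityTheory
open scoped ENNReal NNReal

lemma integrable_mul_of_memL2 {δ : Type*} [MeasurableSpace δ] {m : Measure δ}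
    {u v : δ → ℝ} (hu : MemLp u 2 m) (hv : MemLp v 2 m) :
    Integrable (fun x => u x * v x) m := by
  have h := hu.smul (φ := v) hv (p := 2) (q := 2) (r := 1)
    (hpqr := ⟨by simp [one_div, ENNReal.inv_two_add_inv_two]⟩)
  rw [memLp_one_iff_integrable] at h
  refine h.congr (Filter.Eventually.of_forall fun x => ?_)
  simp [mul_comm]

lemma memL2_integral_left {α β : Type*} [MeasurableSpace α] [MeasurableSpace β]
    {ν : Measure α} {μ : Measure β} [IsProbabilityMeasure ν] [SFinite μ]
    {f : α × β → ℝ} (hf : Measurable f) (h2 : MemLp f 2 (ν.prod μ)) :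
    MemLp (fun b => ∫ a, f (a, b) ∂ν) 2 μ := by
  refine ⟨hf.stronglyMeasurable.integral_prod_left'.aestronglyMeasurable, ?_⟩
  rw [eLpNorm_lt_top_iff_lintegral_rpow_enorm_lt_top two_ne_zero ENNReal.ofNat_ne_top]
  have hfin : ∫⁻ z, ‖f z‖ₑ ^ (2 : ℝ≥0∞).toReal ∂(ν.prod μ) < ⊤ :=
    (eLpNorm_lt_top_iff_lintegral_rpow_enorm_lt_top two_ne_zero ENNReal.ofNat_ne_top).mp h2.2
  have hmeas : Measurable fun z => ‖f z‖ₑ ^ (2 : ℝ≥0∞).toReal :=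
    hf.enorm.pow_const _
  simp only [ENNReal.toReal_ofNat] at hfin ⊢
  calc ∫⁻ b, ‖∫ a, f (a, b) ∂ν‖ₑ ^ (2 : ℝ) ∂μ
      ≤ ∫⁻ b, (∫⁻ a, ‖f (a, b)‖ₑ ∂ν) ^ (2 : ℝ) ∂μ := by
        refine lintegral_mono fun b => ?_
        exact ENNReal.rpow_le_rpow (enorm_integral_le_lintegral_enorm _) (by norm_num)
    _ ≤ ∫⁻ b, (∫⁻ a, ‖f (a, b)‖ₑ ^ (2 : ℝ) ∂ν) ∂μ := by
        refine lintegral_mono fun b => ?_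
        have hFb : AEMeasurable (fun a => ‖f (a, b)‖ₑ) ν :=
          ((hf.comp (measurable_id.prodMk measurable_const)).enorm).aemeasurable
        have h := ENNReal.lintegral_mul_le_Lp_mul_Lq ν (p := 2) (q := 2)
          Real.HolderConjugate.two_two hFb aemeasurable_const (g := fun _ => 1)
        simp only [mul_one, ENNReal.one_rpow, lintegral_one, measure_univ] at h
        calc (∫⁻ a, ‖f (a, b)‖ₑ ∂ν) ^ (2 : ℝ)
            ≤ ((∫⁻ a, ‖f (a, b)‖ₑ ^ (2 : ℝ) ∂ν) ^ (1 / 2 : ℝ)) ^ (2 : ℝ) := by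
              exact ENNReal.rpow_le_rpow (by simpa using h) (by norm_num)
          _ = ∫⁻ a, ‖f (a, b)‖ₑ ^ (2 : ℝ) ∂ν := by
              rw [← ENNReal.rpow_mul]; norm_num
    _ = ∫⁻ z, ‖f z‖ₑ ^ (2 : ℝ) ∂(ν.prod μ) := by
        rw [lintegral_prod_symm _ (by simpa using hmeas.aemeasurable)]
    _ < ⊤ := by simpa using hfin

lemma condexp_indepFun_integral_comp {Ω α β : Type*} [MeasurableSpace Ω]
    [MeasurableSpace α] [MeasurableSpace β]
    (P : Measure Ω) [IsProbabilityMeasure P]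
    {X : Ω → α} {Y : Ω → β} (hX : Measurable X) (hY : Measurable Y)
    (hindep : IndepFun X Y P) {f : α × β → ℝ} (hf : Measurable f)
    (hfint : Integrable (fun ω => f (X ω, Y ω)) P) :
    P[(fun ω => f (X ω, Y ω)) | MeasurableSpace.comap Y inferInstance]
      =ᵐ[P] fun ω => ∫ a, f (a, Y ω) ∂(P.map X) := by
  have hXY : Measurable fun ω => (X ω, Y ω) := hX.prodMk hY
  haveI : IsProbabilityMeasure (P.map X) := Measure.isProbabilityMeasure_map hX.aemeasurable
  haveI : IsProbabilityMeasure (P.map Y) := Measure.isProbabilityMeasure_map hY.aemeasurable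
  have hmap : P.map (fun ω => (X ω, Y ω)) = (P.map X).prod (P.map Y) :=
    (indepFun_iff_map_prod_eq_prod_map_map hX.aemeasurable hY.aemeasurable).mp hindep
  have hm : MeasurableSpace.comap Y inferInstance ≤ _ := hY.comap_le
  haveI : SigmaFinite (P.trim hm) := inferInstance
  have hfprod : Integrable f ((P.map X).prod (P.map Y)) := by
    rw [← hmap]
    exact (integrable_map_measure hf.aestronglyMeasurable hXY.aemeasurable).mpr hfint
  have hφsm : StronglyMeasurable fun b => ∫ a, f (a, b) ∂(P.map X) :=
    hf.stronglyMeasurable.integral_prod_left'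
  have hφint : Integrable (fun b => ∫ a, f (a, b) ∂(P.map X)) (P.map Y) :=
    hfprod.integral_prod_right
  have hφY_int : Integrable (fun ω => ∫ a, f (a, Y ω) ∂(P.map X)) P :=
    (integrable_map_measure hφsm.aestronglyMeasurable hY.aemeasurable).mp hφint
  refine (ae_eq_condExp_of_forall_setIntegral_eq hm hfint
      (fun s _ _ => hφY_int.integrableOn) (fun s hs _ => ?_) ?_).symm
  · obtain ⟨t, ht, rfl⟩ := hs
    have e1 : ∫ ω in Y ⁻¹' t, (∫ a, f (a, Y ω) ∂(P.map X)) ∂P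
        = ∫ b in t, (∫ a, f (a, b) ∂(P.map X)) ∂(P.map Y) :=
      (setIntegral_map ht hφsm.aestronglyMeasurable hY.aemeasurable).symm
    have hpre : (fun ω => (X ω, Y ω)) ⁻¹' (Set.univ ×ˢ t) = Y ⁻¹' t := by
      ext ω; simp
    have e2 : ∫ ω in Y ⁻¹' t, f (X ω, Y ω) ∂P
        = ∫ z in Set.univ ×ˢ t, f z ∂((P.map X).prod (P.map Y)) := by
      rw [← hmap, setIntegral_map (MeasurableSet.univ.prod ht) hf.aestronglyMeasurable
        hXY.aemeasurable, hpre]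
    have hres : ((P.map X).prod (P.map Y)).restrict (Set.univ ×ˢ t)
        = (P.map X).prod ((P.map Y).restrict t) := by
      rw [← Measure.prod_restrict, Measure.restrict_univ]
    have hint' : Integrable f ((P.map X).prod ((P.map Y).restrict t)) := by
      rw [← hres]; exact hfprod.restrict
    have e3 : ∫ z in Set.univ ×ˢ t, f z ∂((P.map X).prod (P.map Y))
        = ∫ b in t, (∫ a, f (a, b) ∂(P.map X)) ∂(P.map Y) := by
      calc ∫ z in Set.univ ×ˢ t, f z ∂((P.map X).prod (P.map Y))
          = ∫ z, f z ∂((P.map X).prod ((P.map Y).restrict t)) := by rw [hres]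
        _ = ∫ b, ∫ a, f (a, b) ∂(P.map X) ∂((P.map Y).restrict t) :=
            integral_prod_symm _ hint'
    rw [e1, e2, e3]
  · exact ⟨fun ω => ∫ a, f (a, Y ω) ∂(P.map X),
      hφsm.comp_measurable (measurable_iff_comap_le.mpr le_rfl), Filter.EventuallyEq.rfl⟩

/-- The covariance matrix of an `ℝ^n`-valued random vector `h`:
`(Cov h)_{i j} = E[(h_i − E h_i)(h_j − E h_j)]`. -/
noncomputable def covMatrix {Ω : Type*} [MeasurableSpace Ω] (P : Measure Ω) {n : ℕ}
    (h : Ω → Fin n → ℝ) : Matrix (Fin n) (Fin n) ℝ :=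
  fun i j => ∫ ω, (h ω i - ∫ ω', h ω' i ∂P) * (h ω j - ∫ ω', h ω' j ∂P) ∂P

/-- Proposition 5(ii): for mutually independent `A`, `A'`, `B` with `A'`
distributed as `A` and a square-integrable output `g(A,B)`, the total-effect covariance
matrix of the block `A` equals the second-moment matrix of the outputs minus the
pick-freeze cross-moment matrix in which the `A`-block is replaced by an independent copy:
`Cov(g(A,B) − E[g(A,B) | σ(B)]) = E[g(A,B) g(A,B)ᵀ] − E[g(A,B) g(A',B)ᵀ]`. -/
theorem pick_freeze_total_effect_covariance
    {Ω : Type*} [MeasurableSpace Ω] (P : Measure Ω) [IsProbabilityMeasure P]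
    (p q n : ℕ)
    (A A' : Ω → Fin p → ℝ) (B : Ω → Fin q → ℝ)
    (hA : Measurable A) (hA' : Measurable A') (hB : Measurable B)
    -- mutual independence of A, A', B:
    (hindep1 : IndepFun A (fun ω => (A' ω, B ω)) P)
    (hindep2 : IndepFun A' B P)
    (hAA' : IdentDistrib A' A P P)
    (g : (Fin p → ℝ) × (Fin q → ℝ) → Fin n → ℝ) (hg : Measurable g)
    (hint : MemLp (fun ω => g (A ω, B ω)) 2 P) :
    ∀ i j : Fin n,
      covMatrix P (fun ω k =>
          g (A ω, B ω) k -
            (P[fun ω' => g (A ω', B ω') k | MeasurableSpace.comap B inferInstance]) ω)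
          i j
        = (∫ ω, g (A ω, B ω) i * g (A ω, B ω) j ∂P)
            - (∫ ω, g (A ω, B ω) i * g (A' ω, B ω) j ∂P) := by
  intro i j
  have hXY : Measurable fun ω => (A ω, B ω) := hA.prodMk hB
  have hXY' : Measurable fun ω => (A' ω, B ω) := hA'.prodMk hB
  haveI : IsProbabilityMeasure (P.map A) := Measure.isProbabilityMeasure_map hA.aemeasurable
  haveI : IsProbabilityMeasure (P.map B) := Measure.isProbabilityMeasure_map hB.aemeasurable
  have hAB : IndepFun A B P := hindep1.comp measurable_id measurable_snd
  have hmapAB : P.map (fun ω => (A ω, B ω)) = (P.map A).prod (P.map B) :=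
    (indepFun_iff_map_prod_eq_prod_map_map hA.aemeasurable hB.aemeasurable).mp hAB
  have hmapA'B : P.map (fun ω => (A' ω, B ω)) = (P.map A).prod (P.map B) := by
    rw [(indepFun_iff_map_prod_eq_prod_map_map hA'.aemeasurable hB.aemeasurable).mp hindep2,
      hAA'.map_eq]
  have hmapT : P.map (fun ω => (A ω, (A' ω, B ω)))
      = (P.map A).prod ((P.map A).prod (P.map B)) := by
    rw [(indepFun_iff_map_prod_eq_prod_map_map hA.aemeasurable hXY'.aemeasurable).mp hindep1,
      hmapA'B]
  have hgk : ∀ k : Fin n, Measurable fun z : (Fin p → ℝ) × (Fin q → ℝ) => g z k :=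
    fun k => (measurable_pi_apply k).comp hg
  have h2 : ∀ k, MemLp (fun ω => g (A ω, B ω) k) 2 P := by
    intro k
    refine hint.of_le ((hgk k).comp hXY).aestronglyMeasurable ?_
    exact Filter.Eventually.of_forall fun ω => by
      simpa using norm_le_pi_norm (g (A ω, B ω)) k
  have h2prod : ∀ k, MemLp (fun z : (Fin p → ℝ) × (Fin q → ℝ) => g z k) 2
      ((P.map A).prod (P.map B)) := by
    intro k
    rw [← hmapAB]
    exact (memLp_map_measure_iff (hgk k).aestronglyMeasurable hXY.aemeasurable).mpr (h2 k)
  have h2' : ∀ k, MemLp (fun ω => g (A' ω, B ω) k) 2 P := by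
    intro k
    have h := h2prod k
    rw [← hmapA'B] at h
    exact (memLp_map_measure_iff (hgk k).aestronglyMeasurable hXY'.aemeasurable).mp h
  have hφsm : ∀ k, StronglyMeasurable fun b => ∫ a, g (a, b) k ∂(P.map A) := fun k =>
    (hgk k).stronglyMeasurable.integral_prod_left'
  have hφ2 : ∀ k, MemLp (fun b => ∫ a, g (a, b) k ∂(P.map A)) 2 (P.map B) := fun k =>
    memL2_integral_left (hgk k) (h2prod k)
  have hφB2 : ∀ k, MemLp (fun ω => ∫ a, g (a, B ω) k ∂(P.map A)) 2 P := fun k =>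
    (memLp_map_measure_iff (hφsm k).aestronglyMeasurable hB.aemeasurable).mp (hφ2 k)
  have hφsnd2 : ∀ k, MemLp (fun z : (Fin p → ℝ) × (Fin q → ℝ) =>
      ∫ a, g (a, z.2) k ∂(P.map A)) 2 ((P.map A).prod (P.map B)) := by
    intro k
    have hmap2 : Measure.map Prod.snd ((P.map A).prod (P.map B)) = P.map B := by
      rw [Measure.map_snd_prod, measure_univ, one_smul]
    have h := hφ2 k
    rw [← hmap2] at h
    exact (memLp_map_measure_iff (hφsm k).aestronglyMeasurable
      measurable_snd.aemeasurable).mp h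
  have hce : ∀ k, (P[fun ω' => g (A ω', B ω') k | MeasurableSpace.comap B inferInstance])
      =ᵐ[P] fun ω => ∫ a, g (a, B ω) k ∂(P.map A) := fun k =>
    condexp_indepFun_integral_comp P hA hB hAB (hgk k) ((h2 k).integrable one_le_two)
  -- the centered variables have mean zero
  have hmean : ∀ k, ∫ ω, (g (A ω, B ω) k -
      (P[fun ω' => g (A ω', B ω') k | MeasurableSpace.comap B inferInstance]) ω) ∂P = 0 := by
    intro k
    have hint1 : Integrable (fun ω => g (A ω, B ω) k) P := (h2 k).integrable one_le_two
    have hint2 : Integrable (fun ω => ∫ a, g (a, B ω) k ∂(P.map A)) P :=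
      (hφB2 k).integrable one_le_two
    have hcongr : ∫ ω, (g (A ω, B ω) k -
        (P[fun ω' => g (A ω', B ω') k | MeasurableSpace.comap B inferInstance]) ω) ∂P
        = ∫ ω, (g (A ω, B ω) k - ∫ a, g (a, B ω) k ∂(P.map A)) ∂P := by
      refine integral_congr_ae ?_
      filter_upwards [hce k] with ω hω
      rw [hω]
    rw [hcongr, integral_sub hint1 hint2]
    have e1 : ∫ ω, (∫ a, g (a, B ω) k ∂(P.map A)) ∂P
        = ∫ b, (∫ a, g (a, b) k ∂(P.map A)) ∂(P.map B) :=
      (integral_map hB.aemeasurable (hφsm k).aestronglyMeasurable).symm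
    have e2 : ∫ ω, g (A ω, B ω) k ∂P = ∫ z, g z k ∂((P.map A).prod (P.map B)) := by
      rw [← hmapAB]
      exact (integral_map hXY.aemeasurable (hgk k).aestronglyMeasurable).symm
    have e3 : ∫ z, g z k ∂((P.map A).prod (P.map B))
        = ∫ b, (∫ a, g (a, b) k ∂(P.map A)) ∂(P.map B) :=
      integral_prod_symm _ ((h2prod k).integrable one_le_two)
    rw [e1, e2, e3, sub_self]
  -- unfold covMatrix and kill the means
  simp only [covMatrix]
  rw [hmean i, hmean j]
  simp only [sub_zero]
  -- replace the conditional expectations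
  have hcongr2 : ∫ ω, (g (A ω, B ω) i -
        (P[fun ω' => g (A ω', B ω') i | MeasurableSpace.comap B inferInstance]) ω)
      * (g (A ω, B ω) j -
        (P[fun ω' => g (A ω', B ω') j | MeasurableSpace.comap B inferInstance]) ω) ∂P
      = ∫ ω, (g (A ω, B ω) i - ∫ a, g (a, B ω) i ∂(P.map A))
          * (g (A ω, B ω) j - ∫ a, g (a, B ω) j ∂(P.map A)) ∂P := by
    refine integral_congr_ae ?_
    filter_upwards [hce i, hce j] with ω h1 h2
    rw [h1, h2]
  rw [hcongr2]
  have hii : Integrable (fun ω => g (A ω, B ω) i * g (A ω, B ω) j) P :=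
    integrable_mul_of_memL2 (h2 i) (h2 j)
  have hij : Integrable (fun ω => g (A ω, B ω) i * ∫ a, g (a, B ω) j ∂(P.map A)) P :=
    integrable_mul_of_memL2 (h2 i) (hφB2 j)
  have hji : Integrable (fun ω => (∫ a, g (a, B ω) i ∂(P.map A)) * g (A ω, B ω) j) P :=
    integrable_mul_of_memL2 (hφB2 i) (h2 j)
  have hjj : Integrable (fun ω => (∫ a, g (a, B ω) i ∂(P.map A))
      * ∫ a, g (a, B ω) j ∂(P.map A)) P :=
    integrable_mul_of_memL2 (hφB2 i) (hφB2 j)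
  have hexpand : ∫ ω, (g (A ω, B ω) i - ∫ a, g (a, B ω) i ∂(P.map A))
        * (g (A ω, B ω) j - ∫ a, g (a, B ω) j ∂(P.map A)) ∂P
      = (∫ ω, g (A ω, B ω) i * g (A ω, B ω) j ∂P)
        - (∫ ω, g (A ω, B ω) i * ∫ a, g (a, B ω) j ∂(P.map A) ∂P)
        - (∫ ω, (∫ a, g (a, B ω) i ∂(P.map A)) * g (A ω, B ω) j ∂P)
        + (∫ ω, (∫ a, g (a, B ω) i ∂(P.map A)) * ∫ a, g (a, B ω) j ∂(P.map A) ∂P) := by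
    have heq : (fun ω => (g (A ω, B ω) i - ∫ a, g (a, B ω) i ∂(P.map A))
          * (g (A ω, B ω) j - ∫ a, g (a, B ω) j ∂(P.map A)))
        = fun ω => g (A ω, B ω) i * g (A ω, B ω) j
          - g (A ω, B ω) i * ∫ a, g (a, B ω) j ∂(P.map A)
          - (∫ a, g (a, B ω) i ∂(P.map A)) * g (A ω, B ω) j
          + (∫ a, g (a, B ω) i ∂(P.map A)) * ∫ a, g (a, B ω) j ∂(P.map A) := by
      funext ω; ring
    have hs1 : Integrable (fun ω => g (A ω, B ω) i * g (A ω, B ω) j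
        - g (A ω, B ω) i * ∫ a, g (a, B ω) j ∂(P.map A)) P := hii.sub hij
    have hs2 : Integrable (fun ω => (g (A ω, B ω) i * g (A ω, B ω) j
        - g (A ω, B ω) i * ∫ a, g (a, B ω) j ∂(P.map A))
        - (∫ a, g (a, B ω) i ∂(P.map A)) * g (A ω, B ω) j) P := hs1.sub hji
    rw [heq, integral_add hs2 hjj, integral_sub hs1 hji, integral_sub hii hij]
  rw [hexpand]
  -- the three φ-integrals all equal ∫ b, φ i b * φ j b ∂(P.map B)
  have key1 : ∫ ω, g (A ω, B ω) i * ∫ a, g (a, B ω) j ∂(P.map A) ∂P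
      = ∫ b, (∫ a, g (a, b) i ∂(P.map A)) * ∫ a, g (a, b) j ∂(P.map A) ∂(P.map B) := by
    have hm : Measurable fun z : (Fin p → ℝ) × (Fin q → ℝ) =>
        g z i * ∫ a, g (a, z.2) j ∂(P.map A) :=
      (hgk i).mul ((hφsm j).measurable.comp measurable_snd)
    have hintp : Integrable (fun z : (Fin p → ℝ) × (Fin q → ℝ) =>
        g z i * ∫ a, g (a, z.2) j ∂(P.map A)) ((P.map A).prod (P.map B)) :=
      integrable_mul_of_memL2 (h2prod i) (hφsnd2 j)
    calc ∫ ω, g (A ω, B ω) i * ∫ a, g (a, B ω) j ∂(P.map A) ∂P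
        = ∫ z, g z i * ∫ a, g (a, z.2) j ∂(P.map A) ∂((P.map A).prod (P.map B)) := by
          rw [← hmapAB]
          exact (integral_map hXY.aemeasurable hm.aestronglyMeasurable).symm
      _ = ∫ b, ∫ a, g (a, b) i * ∫ a', g (a', b) j ∂(P.map A) ∂(P.map A) ∂(P.map B) :=
          integral_prod_symm _ hintp
      _ = ∫ b, (∫ a, g (a, b) i ∂(P.map A)) * ∫ a, g (a, b) j ∂(P.map A) ∂(P.map B) := by
          simp_rw [integral_mul_const]
  have key2 : ∫ ω, (∫ a, g (a, B ω) i ∂(P.map A)) * g (A ω, B ω) j ∂P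
      = ∫ b, (∫ a, g (a, b) i ∂(P.map A)) * ∫ a, g (a, b) j ∂(P.map A) ∂(P.map B) := by
    have hm : Measurable fun z : (Fin p → ℝ) × (Fin q → ℝ) =>
        (∫ a, g (a, z.2) i ∂(P.map A)) * g z j :=
      ((hφsm i).measurable.comp measurable_snd).mul (hgk j)
    have hintp : Integrable (fun z : (Fin p → ℝ) × (Fin q → ℝ) =>
        (∫ a, g (a, z.2) i ∂(P.map A)) * g z j) ((P.map A).prod (P.map B)) :=
      integrable_mul_of_memL2 (hφsnd2 i) (h2prod j)
    calc ∫ ω, (∫ a, g (a, B ω) i ∂(P.map A)) * g (A ω, B ω) j ∂P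
        = ∫ z, (∫ a, g (a, z.2) i ∂(P.map A)) * g z j ∂((P.map A).prod (P.map B)) := by
          rw [← hmapAB]
          exact (integral_map hXY.aemeasurable hm.aestronglyMeasurable).symm
      _ = ∫ b, ∫ a', (∫ a, g (a, b) i ∂(P.map A)) * g (a', b) j ∂(P.map A) ∂(P.map B) :=
          integral_prod_symm _ hintp
      _ = ∫ b, (∫ a, g (a, b) i ∂(P.map A)) * ∫ a, g (a, b) j ∂(P.map A) ∂(P.map B) := by
          simp_rw [integral_const_mul]
  have key3 : ∫ ω, (∫ a, g (a, B ω) i ∂(P.map A)) * ∫ a, g (a, B ω) j ∂(P.map A) ∂P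
      = ∫ b, (∫ a, g (a, b) i ∂(P.map A)) * ∫ a, g (a, b) j ∂(P.map A) ∂(P.map B) :=
    (integral_map hB.aemeasurable
      (((hφsm i).mul (hφsm j)).aestronglyMeasurable)).symm
  have key4 : ∫ ω, g (A ω, B ω) i * g (A' ω, B ω) j ∂P
      = ∫ b, (∫ a, g (a, b) i ∂(P.map A)) * ∫ a, g (a, b) j ∂(P.map A) ∂(P.map B) := by
    have h1 : Integrable (fun ω => g (A ω, B ω) i * g (A' ω, B ω) j) P :=
      integrable_mul_of_memL2 (h2 i) (h2' j)
    have hΨm : Measurable fun x : (Fin p → ℝ) × ((Fin p → ℝ) × (Fin q → ℝ)) =>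
        g (x.1, x.2.2) i * g x.2 j :=
      ((hgk i).comp (measurable_fst.prodMk (measurable_snd.comp measurable_snd))).mul
        ((hgk j).comp measurable_snd)
    have hT : Measurable fun ω => (A ω, (A' ω, B ω)) := hA.prodMk hXY'
    have hΨint : Integrable (fun x : (Fin p → ℝ) × ((Fin p → ℝ) × (Fin q → ℝ)) =>
        g (x.1, x.2.2) i * g x.2 j) ((P.map A).prod ((P.map A).prod (P.map B))) := by
      rw [← hmapT]
      exact (integrable_map_measure hΨm.aestronglyMeasurable hT.aemeasurable).mpr h1
    have hinner : Integrable (fun w : (Fin p → ℝ) × (Fin q → ℝ) =>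
        (∫ a, g (a, w.2) i ∂(P.map A)) * g w j) ((P.map A).prod (P.map B)) :=
      integrable_mul_of_memL2 (hφsnd2 i) (h2prod j)
    calc ∫ ω, g (A ω, B ω) i * g (A' ω, B ω) j ∂P
        = ∫ x, g (x.1, x.2.2) i * g x.2 j ∂((P.map A).prod ((P.map A).prod (P.map B))) := by
          rw [← hmapT]
          exact (integral_map hT.aemeasurable hΨm.aestronglyMeasurable).symm
      _ = ∫ w, ∫ a, g (a, w.2) i * g w j ∂(P.map A) ∂((P.map A).prod (P.map B)) :=
          integral_prod_symm _ hΨint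
      _ = ∫ w : (Fin p → ℝ) × (Fin q → ℝ),
            (∫ a, g (a, w.2) i ∂(P.map A)) * g w j ∂((P.map A).prod (P.map B)) := by
          simp_rw [integral_mul_const]
      _ = ∫ b, ∫ a', (∫ a, g (a, b) i ∂(P.map A)) * g (a', b) j ∂(P.map A) ∂(P.map B) :=
          integral_prod_symm _ hinner
      _ = ∫ b, (∫ a, g (a, b) i ∂(P.map A)) * ∫ a, g (a, b) j ∂(P.map A) ∂(P.map B) := by
          simp_rw [integral_const_mul]
  rw [key1, key2, key3, key4]
  ring
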